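/- For q ∈ {2,3} and k ≥ 4, the generator matrix of any [2k, k, k]_q linear code has no repeated columns (no two columns are equal). -/

import Mathlib

open Finset

/-- For `q ∈ {2,3}` and `k ≥ 4`, a generator matrix of a `[2k, k, k]_q` linear
code has no repeated columns. -/
theorem no_repeated_columns (q : ℕ) (hq : q = 2 ∨ q = 3) (k : ℕ) (hk : 4 ≤ k)
    (G : Matrix (Fin k) (Fin (2 * k)) (ZMod q))
    (hindep : LinearIndependent (ZMod q) (fun i => G i))
    (hdist : ∀ u : Fin k → ZMod q, u ≠ 0 → k ≤ hammingNorm (Matrix.vecMul u G))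
    (hmin : ∃ u : Fin k → ZMod q, u ≠ 0 ∧ hammingNorm (Matrix.vecMul u G) = k) :
    ∀ j1 j2 : Fin (2 * k), j1 ≠ j2 → (fun i => G i j1) ≠ (fun i => G i j2) := by
  classical
  intro j1 j2 hne heq
  have hq2 : 2 ≤ q := by rcases hq with h | h <;> omega
  haveI hqp : Fact (Nat.Prime q) := ⟨by rcases hq with h | h <;> subst h <;> norm_num⟩
  -- choose a set S of k-3 coordinates avoiding j1, j2
  obtain ⟨S, hSsub, hScard⟩ : ∃ S ⊆ ({j1, j2}ᶜ : Finset (Fin (2 * k))), S.card = k - 3 := by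
    apply Finset.exists_subset_card_eq
    have h2 : ({j1, j2} : Finset (Fin (2 * k))).card = 2 := by
      rw [Finset.card_insert_of_notMem (by simpa using hne), Finset.card_singleton]
    rw [Finset.card_compl, h2, Fintype.card_fin]
    omega
  have hj1S : j1 ∉ S := fun h => by simpa using hSsub h
  have hj2S : j2 ∉ S := fun h => by simpa using hSsub h
  set T : Finset (Fin (2 * k)) := insert j1 S with hT
  have hTcard : T.card = k - 2 := by
    rw [hT, Finset.card_insert_of_notMem hj1S, hScard]; omega
  set T2 : Finset (Fin (2 * k)) := insert j2 T with hT2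
  have hj2T : j2 ∉ T := by
    simp only [hT, Finset.mem_insert]
    push_neg
    exact ⟨Ne.symm hne, hj2S⟩
  have hT2card : T2.card = k - 1 := by
    rw [hT2, Finset.card_insert_of_notMem hj2T, hTcard]; omega
  set R : Finset (Fin (2 * k)) := T2ᶜ with hR
  have hRcard : R.card = k + 1 := by
    rw [hR, Finset.card_compl, hT2card, Fintype.card_fin]; omega
  -- the shortened subspace V
  set Φ : (Fin k → ZMod q) →ₗ[ZMod q] (↥T → ZMod q) :=
    (LinearMap.funLeft (ZMod q) (ZMod q) (fun j : ↥T => (j : Fin (2 * k)))).comp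
      G.vecMulLinear with hΦ
  set V : Submodule (ZMod q) (Fin k → ZMod q) := LinearMap.ker Φ with hV
  have hmemV : ∀ u, u ∈ V ↔ ∀ j ∈ T, Matrix.vecMul u G j = 0 := by
    intro u
    constructor
    · intro hu j hj
      have := congrFun (LinearMap.mem_ker.mp hu) ⟨j, hj⟩
      simpa [hΦ] using this
    · intro h
      refine LinearMap.mem_ker.mpr (funext fun j => ?_)
      simpa [hΦ] using h j j.2
  -- dimension of V is at least 2
  have hfrV : 2 ≤ Module.finrank (ZMod q) V := by
    have h1 : Module.finrank (ZMod q) (LinearMap.range Φ) + Module.finrank (ZMod q) V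
        = Module.finrank (ZMod q) (Fin k → ZMod q) :=
      LinearMap.finrank_range_add_finrank_ker Φ
    have h2 : Module.finrank (ZMod q) (Fin k → ZMod q) = k := Module.finrank_fin_fun (ZMod q)
    have h3 : Module.finrank (ZMod q) (LinearMap.range Φ) ≤ k - 2 := by
      refine le_trans (Submodule.finrank_le _) ?_
      rw [Module.finrank_pi, Fintype.card_coe, hTcard]
    rw [h2] at h1
    omega
  set Vfin : Finset (Fin k → ZMod q) := Finset.univ.filter (· ∈ V) with hVfin
  set m : ℕ := Vfin.card with hm
  have hmcard : m = Fintype.card V := by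
    rw [hm, hVfin, Fintype.card_subtype]
  have hmge : q ^ 2 ≤ m := by
    rw [hmcard, Module.card_eq_pow_finrank (K := ZMod q), ZMod.card]
    exact Nat.pow_le_pow_right (by omega) hfrV
  -- each nonzero element of V has at most one zero among the coordinates of R
  have hz : ∀ u ∈ V, u ≠ 0 → (R.filter fun j => Matrix.vecMul u G j = 0).card ≤ 1 := by
    intro u hu hu0
    set Z : Finset (Fin (2 * k)) := Finset.univ.filter (fun j => Matrix.vecMul u G j = 0)
      with hZ
    have hT2Z : T2 ⊆ Z := by
      intro j hj
      rw [hZ, Finset.mem_filter]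
      refine ⟨Finset.mem_univ _, ?_⟩
      rcases Finset.mem_insert.mp hj with h | h
      · subst h
        have h1 : Matrix.vecMul u G j1 = 0 := (hmemV u).mp hu j1 (Finset.mem_insert_self _ _)
        calc Matrix.vecMul u G j = dotProduct u (fun i => G i j) := rfl
          _ = dotProduct u (fun i => G i j1) := by rw [← heq]
          _ = Matrix.vecMul u G j1 := rfl
          _ = 0 := h1
      · exact (hmemV u).mp hu j h
    have hZcard : Z.card ≤ k := by
      have hnorm := hdist u hu0
      have hle : hammingNorm (Matrix.vecMul u G) ≤ (Zᶜ).card := by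
        unfold hammingNorm
        apply Finset.card_le_card
        intro j hj
        rw [Finset.mem_filter] at hj
        simp only [Finset.mem_compl, hZ, Finset.mem_filter, Finset.mem_univ, true_and]
        exact hj.2
      rw [Finset.card_compl, Fintype.card_fin] at hle
      omega
    have : R.filter (fun j => Matrix.vecMul u G j = 0) = Z \ T2 := by
      rw [hR]
      ext j
      simp only [Finset.mem_filter, Finset.mem_compl, Finset.mem_sdiff, hZ,
        Finset.mem_univ, true_and]
      tauto
    rw [this, Finset.card_sdiff_of_subset hT2Z]
    omega
  -- the kernels at each coordinate of R
  set Kfin : Fin (2 * k) → Finset (Fin k → ZMod q) :=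
    fun j => Vfin.filter (fun u => Matrix.vecMul u G j = 0) with hKfin
  have hzeroV : (0 : Fin k → ZMod q) ∈ Vfin := by
    rw [hVfin]; simp [Submodule.zero_mem]
  have hzeroK : ∀ j, (0 : Fin k → ZMod q) ∈ Kfin j := by
    intro j
    rw [hKfin]
    simp only [Finset.mem_filter]
    exact ⟨hzeroV, by simp [Matrix.vecMul]⟩
  -- fiber counting : m ≤ q * (Kfin j).card
  have hfiber : ∀ j, m ≤ q * (Kfin j).card := by
    intro j
    have hsum : m = ∑ c : ZMod q, (Vfin.filter fun u => Matrix.vecMul u G j = c).card := by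
      rw [hm]
      exact Finset.card_eq_sum_card_fiberwise (fun u _ => Finset.mem_univ _)
    have hle : ∀ c : ZMod q, (Vfin.filter fun u => Matrix.vecMul u G j = c).card
        ≤ (Kfin j).card := by
      intro c
      rcases Finset.eq_empty_or_nonempty (Vfin.filter fun u => Matrix.vecMul u G j = c)
        with h | ⟨u0, hu0⟩
      · simp [h]
      · rw [Finset.mem_filter] at hu0
        apply Finset.card_le_card_of_injOn (fun u => u - u0)
        · intro u hu
          rw [Finset.mem_coe, Finset.mem_filter] at hu
          rw [hKfin]
          simp only [Finset.mem_coe, Finset.mem_filter]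
          constructor
          · rw [hVfin] at hu0 hu ⊢
            simp only [Finset.mem_filter, Finset.mem_univ, true_and] at hu0 hu ⊢
            exact V.sub_mem hu.1 hu0.1
          · rw [Matrix.sub_vecMul]
            simp [hu.2, hu0.2]
        · intro a _ b _ hab
          simpa using congrArg (· + u0) hab
    calc m = ∑ c : ZMod q, (Vfin.filter fun u => Matrix.vecMul u G j = c).card := hsum
      _ ≤ Fintype.card (ZMod q) * (Kfin j).card := by
          apply Finset.sum_le_card_nsmul
          intro c _
          exact hle c
      _ = q * (Kfin j).card := by rw [ZMod.card]
  -- disjointness of the punctured kernels over R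
  have hdisj : (R : Set (Fin (2 * k))).PairwiseDisjoint fun j => (Kfin j).erase 0 := by
    intro a ha b hb hab
    simp only [Finset.disjoint_left]
    intro u hua hub
    rw [Finset.mem_erase, hKfin, Finset.mem_filter] at hua hub
    have huV : u ∈ V := by
      have := hua.2.1
      rw [hVfin, Finset.mem_filter] at this
      exact this.2
    have h2 : ({a, b} : Finset (Fin (2 * k))) ⊆
        R.filter fun j => Matrix.vecMul u G j = 0 := by
      intro x hx
      rcases Finset.mem_insert.mp hx with h | h
      · subst h; exact Finset.mem_filter.mpr ⟨ha, hua.2.2⟩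
      · rw [Finset.mem_singleton] at h
        subst h; exact Finset.mem_filter.mpr ⟨hb, hub.2.2⟩
    have hcard2 : ({a, b} : Finset (Fin (2 * k))).card = 2 := by
      rw [Finset.card_insert_of_notMem (by simpa using hab), Finset.card_singleton]
    have := Finset.card_le_card h2
    rw [hcard2] at this
    have := hz u huV hua.1
    omega
  -- sum of the punctured kernel sizes is at most m - 1
  have hsumle : ∑ j ∈ R, ((Kfin j).erase 0).card ≤ m - 1 := by
    rw [← Finset.card_biUnion hdisj]
    have hsub : (R.biUnion fun j => (Kfin j).erase 0) ⊆ Vfin.erase 0 := by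
      intro u hu
      rcases Finset.mem_biUnion.mp hu with ⟨j, _, hj⟩
      rw [Finset.mem_erase, hKfin, Finset.mem_filter] at hj
      exact Finset.mem_erase.mpr ⟨hj.1, hj.2.1⟩
    calc (R.biUnion fun j => (Kfin j).erase 0).card ≤ (Vfin.erase 0).card :=
          Finset.card_le_card hsub
      _ = m - 1 := by rw [Finset.card_erase_of_mem hzeroV, hm]
  -- final arithmetic
  have hterm : ∀ j ∈ R, m - q ≤ q * ((Kfin j).erase 0).card := by
    intro j _
    rw [Finset.card_erase_of_mem (hzeroK j), Nat.mul_sub, mul_one]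
    exact Nat.sub_le_sub_right (hfiber j) q
  have hmain : 5 * (m - q) ≤ q * (m - 1) := by
    calc 5 * (m - q) ≤ R.card * (m - q) := by
          apply Nat.mul_le_mul_right
          omega
      _ = ∑ _j ∈ R, (m - q) := by rw [Finset.sum_const, smul_eq_mul]
      _ ≤ ∑ j ∈ R, q * ((Kfin j).erase 0).card := Finset.sum_le_sum hterm
      _ = q * ∑ j ∈ R, ((Kfin j).erase 0).card := by rw [Finset.mul_sum]
      _ ≤ q * (m - 1) := Nat.mul_le_mul_left q hsumle
  rcases hq with h | h <;> subst h <;>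
    · norm_num at hmge
      omega
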